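/- Let S = M[G; I, Λ; P] be a Rees matrix semigroup over a group G. Then S belongs to Tak(𝒞𝒮) — that is, every ascending chain of CS-subalgebras of S of bounded CS-rank is stationary — if and only if G is a Takahasi group. -/

import Mathlib

section Rees

variable {G I Λ : Type*} [Group G]

/-- Multiplication of the Rees matrix semigroup `M[G; I, Λ; P]`:
`(i, g, λ)(j, h, μ) = (i, g · P(λ, j) · h, μ)`. -/
def reesMul (P : Λ × I → G) (x y : I × G × Λ) : I × G × Λ :=
  (x.1, x.2.1 * P (x.2.2, y.1) * y.2.1, y.2.2)

/-- The completely-regular unary operation on `M[G; I, Λ; P]`: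
`(i, g, λ) ↦ (i, P(λ,i)⁻¹ g⁻¹ P(λ,i)⁻¹, λ)`. -/
def reesBar (P : Λ × I → G) (x : I × G × Λ) : I × G × Λ :=
  (x.1, (P (x.2.2, x.1))⁻¹ * x.2.1⁻¹ * (P (x.2.2, x.1))⁻¹, x.2.2)

/-- A subset closed under the Rees multiplication and the unary operation. -/
def ReesClosed (P : Λ × I → G) (T : Set (I × G × Λ)) : Prop :=
  (∀ x ∈ T, ∀ y ∈ T, reesMul P x y ∈ T) ∧ (∀ x ∈ T, reesBar P x ∈ T)

/-- A CS-subalgebra of `M[G; I, Λ; P]`: a nonempty subset closed under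
multiplication and the unary operation. -/
def IsReesCS (P : Λ × I → G) (T : Set (I × G × Λ)) : Prop :=
  T.Nonempty ∧ ReesClosed P T

/-- The CS-subalgebra generated by a subset: the smallest subset containing it
that is closed under multiplication and the unary operation. -/
def reesClosure (P : Λ × I → G) (A : Set (I × G × Λ)) : Set (I × G × Λ) :=
  ⋂₀ {T : Set (I × G × Λ) | A ⊆ T ∧ ReesClosed P T}

end Rees

namespace StmtAux
variable {G I Λ : Type*} [Group G] (P : Λ × I → G)

lemma subset_reesClosure (A : Set (I × G × Λ)) : A ⊆ reesClosure P A :=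
  fun _ hx => Set.mem_sInter.2 fun _ hT => hT.1 hx

lemma reesClosure_subset {A T : Set (I × G × Λ)} (h1 : A ⊆ T) (h2 : ReesClosed P T) :
    reesClosure P A ⊆ T := Set.sInter_subset_of_mem ⟨h1, h2⟩

lemma reesClosed_reesClosure (A : Set (I × G × Λ)) : ReesClosed P (reesClosure P A) := by
  constructor
  · intro x hx y hy
    exact Set.mem_sInter.2 fun T hT =>
      hT.2.1 x (Set.mem_sInter.1 hx T hT) y (Set.mem_sInter.1 hy T hT)
  · intro x hx
    exact Set.mem_sInter.2 fun T hT => hT.2.2 x (Set.mem_sInter.1 hx T hT)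

lemma exists_forall_le (g : ℕ → ℕ) (B : ℕ) (hb : ∀ n, g n ≤ B) : ∃ N, ∀ n, g n ≤ g N := by
  have hne : (Set.range g).Nonempty := ⟨g 0, 0, rfl⟩
  have hbd : BddAbove (Set.range g) := ⟨B, by rintro _ ⟨n, rfl⟩; exact hb n⟩
  obtain ⟨N, hN⟩ := Nat.sSup_mem hne hbd
  exact ⟨N, fun n => hN ▸ le_csSup hbd ⟨n, rfl⟩⟩

lemma bwd {G I Λ : Type*} [Group G] [Nonempty I] [Nonempty Λ] (P : Λ × I → G)
    (hG : ∀ (M : ℕ) (H : ℕ → Subgroup G), Monotone H →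
       (∀ n, ∃ A : Finset G, A.card ≤ M ∧ Subgroup.closure (A : Set G) = H n) →
       ∃ p, ∀ n, p ≤ n → H n = H p) :
    ∀ (M : ℕ) (T : ℕ → Set (I × G × Λ)), (∀ n, IsReesCS P (T n)) → Monotone T →
       (∀ n, ∃ A : Finset (I × G × Λ), A.card ≤ M ∧
         reesClosure P (A : Set (I × G × Λ)) = T n) →
       ∃ p, ∀ n, p ≤ n → T n = T p := by
  classical
  intro M T hT hmono hrk
  choose A hAcard hAcl using hrk
  have hAsub : ∀ n, (A n : Set (I × G × Λ)) ⊆ T n := by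
    intro n; rw [← hAcl n]; exact subset_reesClosure P _
  set F1 : ℕ → Finset I := fun n => (A n).image Prod.fst with hF1def
  set F2 : ℕ → Finset Λ := fun n => (A n).image (fun z => z.2.2) with hF2def
  have hco : ∀ n, ∀ x ∈ T n, x.1 ∈ F1 n ∧ x.2.2 ∈ F2 n := by
    intro n
    have hsub : T n ⊆ {x : I × G × Λ | x.1 ∈ F1 n ∧ x.2.2 ∈ F2 n} := by
      rw [← hAcl n]
      apply reesClosure_subset
      · intro a ha
        exact ⟨Finset.mem_image_of_mem _ (Finset.mem_coe.1 ha),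
          Finset.mem_image_of_mem _ (Finset.mem_coe.1 ha)⟩
      · constructor
        · rintro x ⟨hx1, _⟩ y ⟨_, hy2⟩; exact ⟨hx1, hy2⟩
        · rintro x ⟨hx1, hx2⟩; exact ⟨hx1, hx2⟩
    exact fun x hx => hsub hx
  have hF1mono : ∀ {m n : ℕ}, m ≤ n → F1 m ⊆ F1 n := by
    intro m n h a ha
    obtain ⟨z, hz, rfl⟩ := Finset.mem_image.1 ha
    exact (hco n _ (hmono h (hAsub m hz))).1
  have hF2mono : ∀ {m n : ℕ}, m ≤ n → F2 m ⊆ F2 n := by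
    intro m n h a ha
    obtain ⟨z, hz, rfl⟩ := Finset.mem_image.1 ha
    exact (hco n _ (hmono h (hAsub m hz))).2
  obtain ⟨N, hN⟩ := exists_forall_le (fun n => (F1 n).card + (F2 n).card) (M + M)
    (by
      intro n
      have h1 : (F1 n).card ≤ M := le_trans (Finset.card_image_le) (hAcard n)
      have h2 : (F2 n).card ≤ M := le_trans (Finset.card_image_le) (hAcard n)
      show (F1 n).card + (F2 n).card ≤ M + M
      omega)
  have hN' : ∀ n, (F1 n).card + (F2 n).card ≤ (F1 N).card + (F2 N).card := hN
  have hstab1 : ∀ n, N ≤ n → F1 n = F1 N := by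
    intro n hn
    have h1 : F1 N ⊆ F1 n := hF1mono hn
    have h2 : F2 N ⊆ F2 n := hF2mono hn
    have c1 := Finset.card_le_card h1
    have c2 := Finset.card_le_card h2
    have c3 := hN' n
    exact (Finset.eq_of_subset_of_card_le h1 (by omega)).symm
  have hstab2 : ∀ n, N ≤ n → F2 n = F2 N := by
    intro n hn
    have h1 : F1 N ⊆ F1 n := hF1mono hn
    have h2 : F2 N ⊆ F2 n := hF2mono hn
    have c1 := Finset.card_le_card h1
    have c2 := Finset.card_le_card h2
    have c3 := hN' n
    exact (Finset.eq_of_subset_of_card_le h2 (by omega)).symm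
  obtain ⟨x₀, hx₀⟩ := (hT N).1
  set i₀ : I := x₀.1 with hi₀def
  set l₀ : Λ := x₀.2.2 with hl₀def
  have hi₀ : i₀ ∈ F1 N := (hco N _ hx₀).1
  have hl₀ : l₀ ∈ F2 N := (hco N _ hx₀).2
  have hpair : ∀ i ∈ F1 N, ∀ l ∈ F2 N, ∃ g : G, (i, g, l) ∈ T N := by
    intro i hi l hl
    obtain ⟨a, haA, ha1⟩ := Finset.mem_image.1 hi
    obtain ⟨b, hbA, hb2⟩ := Finset.mem_image.1 hl
    refine ⟨a.2.1 * P (a.2.2, b.1) * b.2.1, ?_⟩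
    have hmm := (hT N).2.1 a (hAsub N haA) b (hAsub N hbA)
    have he : reesMul P a b = (i, a.2.1 * P (a.2.2, b.1) * b.2.1, l) := by
      rw [← ha1, ← hb2]; rfl
    rwa [he] at hmm
  set u : I → G := fun i => if h : i ∈ F1 N then (hpair i h l₀ hl₀).choose else 1 with hu_def
  have hu : ∀ i ∈ F1 N, (i, u i, l₀) ∈ T N := by
    intro i hi
    simp only [hu_def, dif_pos hi]
    exact (hpair i hi l₀ hl₀).choose_spec
  set w : Λ → G := fun l => if l = l₀ then u i₀
      else if h : l ∈ F2 N then (hpair i₀ hi₀ l h).choose else 1 with hw_def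
  have hwl₀ : w l₀ = u i₀ := by simp [hw_def]
  have hw : ∀ l ∈ F2 N, (i₀, w l, l) ∈ T N := by
    intro l hl
    by_cases h : l = l₀
    · subst h; rw [hwl₀]; exact hu i₀ hi₀
    · simp only [hw_def, if_neg h, dif_pos hl]
      exact (hpair i₀ hi₀ l hl).choose_spec
  set p₀ : G := P (l₀, i₀) with hp₀
  set c : G := u i₀ with hc
  set L : ℕ → Set G := fun n => {g : G | (i₀, g, l₀) ∈ T n} with hLdef
  have hLmul : ∀ n, ∀ g ∈ L n, ∀ h ∈ L n, g * p₀ * h ∈ L n := by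
    intro n g hg h hh
    have h1 := (hT n).2.1 _ hg _ hh
    simpa only [reesMul, ← hp₀, hLdef, Set.mem_setOf_eq] using h1
  have hLinv : ∀ n, ∀ g ∈ L n, p₀⁻¹ * g⁻¹ * p₀⁻¹ ∈ L n := by
    intro n g hg
    have h1 := (hT n).2.2 _ hg
    simpa only [reesBar, ← hp₀, hLdef, Set.mem_setOf_eq] using h1
  have hcL : ∀ n, N ≤ n → c ∈ L n := fun n hn => hmono hn (hu i₀ hi₀)
  have hp₀L : ∀ n, N ≤ n → p₀⁻¹ ∈ L n := by
    intro n hn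
    have h1 := hLmul n _ (hLinv n _ (hcL n hn)) _ (hcL n hn)
    have he : p₀⁻¹ * c⁻¹ * p₀⁻¹ * p₀ * c = p₀⁻¹ := by group
    rwa [he] at h1
  set K : ℕ → Set G := fun n => (fun g => g * p₀) '' L n with hKdef
  have hKmem : ∀ n (a : G), a ∈ K n ↔ (i₀, a * p₀⁻¹, l₀) ∈ T n := by
    intro n a
    constructor
    · rintro ⟨g, hg, rfl⟩
      have he : g * p₀ * p₀⁻¹ = g := by group
      rw [he]; exact hg
    · intro h; exact ⟨a * p₀⁻¹, h, by group⟩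
  have hXi : ∀ i ∈ F1 N, ∀ n, N ≤ n → (i, u i, l₀) ∈ T n := fun i hi n hn => hmono hn (hu i hi)
  have hWl : ∀ l ∈ F2 N, ∀ n, N ≤ n → (i₀, w l, l) ∈ T n := fun l hl n hn => hmono hn (hw l hl)
  have hC1 : ∀ n, N ≤ n → ∀ (i : I) (g : G) (l : Λ),
      ((i, g, l) ∈ T n ↔ i ∈ F1 N ∧ l ∈ F2 N ∧
        p₀⁻¹ * (u i)⁻¹ * g * (w l)⁻¹ ∈ K n) := by
    intro n hn i g l
    constructor
    · intro hx
      have hi : i ∈ F1 N := (hstab1 n hn) ▸ (hco n _ hx).1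
      have hl : l ∈ F2 N := (hstab2 n hn) ▸ (hco n _ hx).2
      refine ⟨hi, hl, ?_⟩
      have hXi₀ : (i₀, c, l₀) ∈ T n := hcL n hn
      have hm : c * P (l₀, i) * g * P (l, i₀) * c ∈ L n := by
        have h1 := (hT n).2.1 _ hXi₀ _ hx
        have h2 := (hT n).2.1 _ h1 _ hXi₀
        simpa only [reesMul, hLdef, Set.mem_setOf_eq] using h2
      have ha : c * P (l₀, i) * u i ∈ L n := by
        have h1 := (hT n).2.1 _ hXi₀ _ (hXi i hi n hn)
        simpa only [reesMul, hLdef, Set.mem_setOf_eq] using h1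
      have hb : w l * P (l, i₀) * c ∈ L n := by
        have h1 := (hT n).2.1 _ (hWl l hl n hn) _ hXi₀
        simpa only [reesMul, hLdef, Set.mem_setOf_eq] using h1
      have h3 := hLmul n _ (hLmul n _ (hLinv n _ ha) _ hm) _ (hLinv n _ hb)
      have he : p₀⁻¹ * (c * P (l₀, i) * u i)⁻¹ * p₀⁻¹ * p₀ *
            (c * P (l₀, i) * g * P (l, i₀) * c) * p₀ *
            (p₀⁻¹ * (w l * P (l, i₀) * c)⁻¹ * p₀⁻¹)
          = (p₀⁻¹ * (u i)⁻¹ * g * (w l)⁻¹) * p₀⁻¹ := by group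
      rw [he] at h3
      rw [hKmem]
      exact h3
    · rintro ⟨hi, hl, hk⟩
      rw [hKmem] at hk
      have h1 := (hT n).2.1 _ (hXi i hi n hn) _ hk
      have h2 := (hT n).2.1 _ h1 _ (hWl l hl n hn)
      have he : u i * P (l₀, i₀) * ((p₀⁻¹ * (u i)⁻¹ * g * (w l)⁻¹) * p₀⁻¹) *
          P (l₀, i₀) * w l = g := by rw [← hp₀]; group
      simpa only [reesMul, he] using h2
  have hKone : ∀ n, N ≤ n → (1 : G) ∈ K n := fun n hn => ⟨p₀⁻¹, hp₀L n hn, by group⟩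
  have hKmul : ∀ n (a b : G), a ∈ K n → b ∈ K n → a * b ∈ K n := by
    rintro n a b ⟨g, hg, rfl⟩ ⟨h, hh, rfl⟩
    exact ⟨g * p₀ * h, hLmul n _ hg _ hh, by group⟩
  have hKinv : ∀ n (a : G), a ∈ K n → a⁻¹ ∈ K n := by
    rintro n a ⟨g, hg, rfl⟩
    exact ⟨p₀⁻¹ * g⁻¹ * p₀⁻¹, hLinv n _ hg, by group⟩
  set Hg : ℕ → Subgroup G := fun n =>
    { carrier := K (N + n)
      one_mem' := hKone _ (Nat.le_add_right _ _)
      mul_mem' := fun {a b} ha hb => hKmul _ a b ha hb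
      inv_mem' := fun {a} ha => hKinv _ a ha } with hHgdef
  have hHgmem : ∀ n (a : G), a ∈ Hg n ↔ a ∈ K (N + n) := fun n a => Iff.rfl
  have hHgmono : Monotone Hg := by
    intro m n hmn a ha
    rw [hHgmem] at ha ⊢
    obtain ⟨g, hg, rfl⟩ := ha
    exact ⟨g, hmono (by omega) hg, rfl⟩
  have hκL : ∀ n, N ≤ n → ∀ l ∈ F2 N, ∀ i ∈ F1 N, w l * P (l, i) * u i ∈ L n := by
    intro n hn l hl i hi
    have h1 := (hT n).2.1 _ (hWl l hl n hn) _ (hXi i hi n hn)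
    simpa only [reesMul, hLdef, Set.mem_setOf_eq] using h1
  have hrkH : ∀ n, ∃ B : Finset G, B.card ≤ 1 + M + M * M ∧
      Subgroup.closure (B : Set G) = Hg n := by
    intro n
    set m := N + n with hm
    have hmN : N ≤ m := Nat.le_add_right _ _
    set B : Finset G := insert (c * p₀)
        ((A m).image (fun a => p₀⁻¹ * (u a.1)⁻¹ * a.2.1 * (w a.2.2)⁻¹) ∪
         (F2 N ×ˢ F1 N).image (fun q => w q.1 * P (q.1, q.2) * u q.2 * p₀)) with hBdef
    have hcB : c * p₀ ∈ Subgroup.closure (B : Set G) := by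
      apply Subgroup.subset_closure
      rw [hBdef]; exact Finset.mem_coe.2 (Finset.mem_insert_self _ _)
    refine ⟨B, ?_, ?_⟩
    · have e1 : ((A m).image (fun a => p₀⁻¹ * (u a.1)⁻¹ * a.2.1 * (w a.2.2)⁻¹)).card ≤ M :=
        le_trans (Finset.card_image_le) (hAcard m)
      have e2 : ((F2 N ×ˢ F1 N).image (fun q => w q.1 * P (q.1, q.2) * u q.2 * p₀)).card
          ≤ M * M := by
        refine le_trans (Finset.card_image_le) ?_
        rw [Finset.card_product]
        have := le_trans (Finset.card_image_le (f := fun z : I × G × Λ => z.2.2)) (hAcard N)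
        have := le_trans (Finset.card_image_le (f := (Prod.fst : I × G × Λ → I))) (hAcard N)
        exact Nat.mul_le_mul ‹(F2 N).card ≤ M› ‹(F1 N).card ≤ M›
      calc B.card ≤ _ + 1 := Finset.card_insert_le _ _
        _ ≤ 1 + M + M * M := by
          have := Finset.card_union_le
            ((A m).image (fun a => p₀⁻¹ * (u a.1)⁻¹ * a.2.1 * (w a.2.2)⁻¹))
            ((F2 N ×ˢ F1 N).image (fun q => w q.1 * P (q.1, q.2) * u q.2 * p₀))
          omega
    · apply le_antisymm
      · rw [Subgroup.closure_le]
        intro b hb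
        rw [Finset.coe_insert, Set.mem_insert_iff] at hb
        rcases hb with rfl | hb
        · rw [SetLike.mem_coe, hHgmem, hKmem]
          have he : c * p₀ * p₀⁻¹ = c := by group
          rw [he]; exact hcL m hmN
        · rw [Finset.coe_union, Set.mem_union, Finset.mem_coe, Finset.mem_coe] at hb
          rcases hb with hb | hb
          · obtain ⟨a, haA, rfl⟩ := Finset.mem_image.1 hb
            have hx : (a.1, a.2.1, a.2.2) ∈ T m := hAsub m haA
            exact ((hC1 m hmN a.1 a.2.1 a.2.2).1 hx).2.2
          · obtain ⟨q, hq, rfl⟩ := Finset.mem_image.1 hb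
            have hq1 : q.1 ∈ F2 N := (Finset.mem_product.1 hq).1
            have hq2 : q.2 ∈ F1 N := (Finset.mem_product.1 hq).2
            exact ⟨w q.1 * P (q.1, q.2) * u q.2, hκL m hmN q.1 hq1 q.2 hq2, rfl⟩
      · intro a ha
        rw [hHgmem, hKmem] at ha
        set D : Set (I × G × Λ) := {x | x.1 ∈ F1 N ∧ x.2.2 ∈ F2 N ∧
          p₀⁻¹ * (u x.1)⁻¹ * x.2.1 * (w x.2.2)⁻¹ ∈ Subgroup.closure (B : Set G)} with hDdef
    -- D is closed and contains A m
        have hκB : ∀ l ∈ F2 N, ∀ i ∈ F1 N,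
            w l * P (l, i) * u i * p₀ ∈ Subgroup.closure (B : Set G) := by
          intro l hl i hi
          apply Subgroup.subset_closure
          rw [hBdef]
          rw [Finset.coe_insert, Set.mem_insert_iff, Finset.coe_union, Set.mem_union]
          refine Or.inr (Or.inr ?_)
          rw [Finset.mem_coe]
          exact Finset.mem_image.2 ⟨(l, i), Finset.mem_product.2 ⟨hl, hi⟩, rfl⟩
        have hDsub : T m ⊆ D := by
          rw [← hAcl m]
          apply reesClosure_subset
          · intro x hx
            have hx' := (hC1 m hmN x.1 x.2.1 x.2.2).1 (hAsub m hx)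
            refine ⟨hx'.1, hx'.2.1, ?_⟩
            apply Subgroup.subset_closure
            rw [hBdef]
            rw [Finset.coe_insert, Set.mem_insert_iff, Finset.coe_union, Set.mem_union]
            refine Or.inr (Or.inl ?_)
            rw [Finset.mem_coe]
            exact Finset.mem_image.2 ⟨x, Finset.mem_coe.1 hx, rfl⟩
          · constructor
            · rintro x ⟨hx1, hx2, hx3⟩ y ⟨hy1, hy2, hy3⟩
              refine ⟨hx1, hy2, ?_⟩
              show p₀⁻¹ * (u x.1)⁻¹ * (x.2.1 * P (x.2.2, y.1) * y.2.1) * (w y.2.2)⁻¹ ∈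
                Subgroup.closure (B : Set G)
              have hκ := hκB x.2.2 hx2 y.1 hy1
              have he : p₀⁻¹ * (u x.1)⁻¹ * (x.2.1 * P (x.2.2, y.1) * y.2.1) * (w y.2.2)⁻¹
                  = (p₀⁻¹ * (u x.1)⁻¹ * x.2.1 * (w x.2.2)⁻¹) *
                    (w x.2.2 * P (x.2.2, y.1) * u y.1 * p₀) *
                    (p₀⁻¹ * (u y.1)⁻¹ * y.2.1 * (w y.2.2)⁻¹) := by group
              rw [he]; exact mul_mem (mul_mem hx3 hκ) hy3
            · rintro x ⟨hx1, hx2, hx3⟩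
              refine ⟨hx1, hx2, ?_⟩
              show p₀⁻¹ * (u x.1)⁻¹ * ((P (x.2.2, x.1))⁻¹ * x.2.1⁻¹ * (P (x.2.2, x.1))⁻¹) *
                (w x.2.2)⁻¹ ∈ Subgroup.closure (B : Set G)
              have hκ := hκB x.2.2 hx2 x.1 hx1
              have he : p₀⁻¹ * (u x.1)⁻¹ *
                  ((P (x.2.2, x.1))⁻¹ * x.2.1⁻¹ * (P (x.2.2, x.1))⁻¹) * (w x.2.2)⁻¹
                  = (w x.2.2 * P (x.2.2, x.1) * u x.1 * p₀)⁻¹ *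
                    (p₀⁻¹ * (u x.1)⁻¹ * x.2.1 * (w x.2.2)⁻¹)⁻¹ *
                    (w x.2.2 * P (x.2.2, x.1) * u x.1 * p₀)⁻¹ := by group
              rw [he]
              exact mul_mem (mul_mem (inv_mem hκ) (inv_mem hx3)) (inv_mem hκ)
        have h5 : (i₀, a * p₀⁻¹, l₀) ∈ D := hDsub ha
        have h6 := h5.2.2
        rw [hwl₀, ← hc] at h6
        have he : a = (c * p₀) * (p₀⁻¹ * c⁻¹ * (a * p₀⁻¹) * c⁻¹) * (c * p₀) := by group
        rw [he]
        exact mul_mem (mul_mem hcB h6) hcB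
  obtain ⟨p, hp⟩ := hG (1 + M + M * M) Hg hHgmono hrkH
  refine ⟨N + p, fun n hn => ?_⟩
  have hnN : N ≤ n := le_trans (Nat.le_add_right _ _) hn
  have hKeq : ∀ a : G, a ∈ K n ↔ a ∈ K (N + p) := by
    intro a
    have h1 : Hg (n - N) = Hg p := hp (n - N) (by omega)
    have h2 : a ∈ Hg (n - N) ↔ a ∈ Hg p := by rw [h1]
    rw [hHgmem, hHgmem] at h2
    rwa [show N + (n - N) = n by omega] at h2
  ext x
  obtain ⟨i, g, l⟩ := x
  rw [hC1 n hnN, hC1 (N + p) (Nat.le_add_right _ _)]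
  constructor
  · rintro ⟨h1, h2, h3⟩; exact ⟨h1, h2, (hKeq _).1 h3⟩
  · rintro ⟨h1, h2, h3⟩; exact ⟨h1, h2, (hKeq _).2 h3⟩

lemma fwd {G I Λ : Type*} [Group G] [Nonempty I] [Nonempty Λ] (P : Λ × I → G)
    (hS : ∀ (M : ℕ) (T : ℕ → Set (I × G × Λ)), (∀ n, IsReesCS P (T n)) →
       Monotone T →
       (∀ n, ∃ A : Finset (I × G × Λ), A.card ≤ M ∧
         reesClosure P (A : Set (I × G × Λ)) = T n) →
       ∃ p, ∀ n, p ≤ n → T n = T p) :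
    (∀ (M : ℕ) (H : ℕ → Subgroup G), Monotone H →
       (∀ n, ∃ A : Finset G, A.card ≤ M ∧
         Subgroup.closure (A : Set G) = H n) →
       ∃ p, ∀ n, p ≤ n → H n = H p) := by
  classical
  intro M H hmono hrk
  obtain ⟨i₀⟩ := ‹Nonempty I›
  obtain ⟨l₀⟩ := ‹Nonempty Λ›
  set p₀ : G := P (l₀, i₀) with hp₀
  set T : ℕ → Set (I × G × Λ) :=
    fun n => {x | x.1 = i₀ ∧ x.2.2 = l₀ ∧ x.2.1 * p₀ ∈ H n} with hTdef
  have hTmem : ∀ n i g l, ((i, g, l) ∈ T n) ↔ (i = i₀ ∧ l = l₀ ∧ g * p₀ ∈ H n) := by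
    intro n i g l; rfl
  have hTcs : ∀ n, IsReesCS P (T n) := by
    intro n
    refine ⟨⟨(i₀, p₀⁻¹, l₀), (hTmem n _ _ _).2 ⟨rfl, rfl, by simpa using one_mem (H n)⟩⟩, ?_, ?_⟩
    · rintro ⟨i, g, l⟩ hx ⟨j, g', l'⟩ hy
      rw [hTmem] at hx hy
      obtain ⟨h1, h2, h3⟩ := hx
      obtain ⟨h1', h2', h3'⟩ := hy
      show (i, g * P (l, j) * g', l') ∈ T n
      rw [hTmem]
      refine ⟨h1, h2', ?_⟩
      rw [h2, h1', ← hp₀]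
      have he : g * p₀ * g' * p₀ = (g * p₀) * (g' * p₀) := by group
      rw [he]; exact mul_mem h3 h3'
    · rintro ⟨i, g, l⟩ hx
      rw [hTmem] at hx
      obtain ⟨h1, h2, h3⟩ := hx
      show (i, (P (l, i))⁻¹ * g⁻¹ * (P (l, i))⁻¹, l) ∈ T n
      rw [hTmem]
      refine ⟨h1, h2, ?_⟩
      rw [h2, h1, ← hp₀]
      have he : p₀⁻¹ * g⁻¹ * p₀⁻¹ * p₀ = (g * p₀)⁻¹ := by group
      rw [he]; exact inv_mem h3
  have hTmono : Monotone T := by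
    intro m n hmn x hx
    exact ⟨hx.1, hx.2.1, hmono hmn hx.2.2⟩
  have hTrk : ∀ n, ∃ A : Finset (I × G × Λ), A.card ≤ M + 1 ∧
      reesClosure P (A : Set (I × G × Λ)) = T n := by
    intro n
    obtain ⟨A, hAcard, hAcl⟩ := hrk n
    set B : Finset (I × G × Λ) := insert (i₀, p₀⁻¹, l₀) (A.image fun a => (i₀, a * p₀⁻¹, l₀))
      with hB
    refine ⟨B, ?_, ?_⟩
    · calc B.card ≤ (A.image fun a => (i₀, a * p₀⁻¹, l₀)).card + 1 := Finset.card_insert_le _ _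
        _ ≤ M + 1 := by
          have := Finset.card_image_le (s := A) (f := fun a => (i₀, a * p₀⁻¹, l₀))
          omega
    · have hBT : (B : Set (I × G × Λ)) ⊆ T n := by
        intro x hx
        simp only [hB, Finset.coe_insert, Finset.coe_image, Set.mem_insert_iff,
          Set.mem_image, Finset.mem_coe] at hx
        rcases hx with rfl | ⟨a, haA, rfl⟩
        · exact (hTmem n _ _ _).2 ⟨rfl, rfl, by simpa using one_mem (H n)⟩
        · refine (hTmem n _ _ _).2 ⟨rfl, rfl, ?_⟩
          have ha : a ∈ H n := by
            rw [← hAcl]; exact Subgroup.subset_closure haA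
          simpa using ha
      apply Set.Subset.antisymm
      · exact reesClosure_subset P hBT (hTcs n).2
      · have hclosed := reesClosed_reesClosure P (B : Set (I × G × Λ))
        set C : Subgroup G :=
          { carrier := {h : G | (i₀, h * p₀⁻¹, l₀) ∈ reesClosure P (B : Set (I × G × Λ))}
            one_mem' := by
              have h1 : (i₀, p₀⁻¹, l₀) ∈ reesClosure P (B : Set (I × G × Λ)) := by
                apply subset_reesClosure
                simp [hB]
              show (i₀, (1 : G) * p₀⁻¹, l₀) ∈ reesClosure P (B : Set (I × G × Λ))
              simpa using h1
            mul_mem' := by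
              intro a b ha hb
              have h2 := hclosed.1 _ ha _ hb
              show (i₀, a * b * p₀⁻¹, l₀) ∈ reesClosure P (B : Set (I × G × Λ))
              have he : reesMul P (i₀, a * p₀⁻¹, l₀) (i₀, b * p₀⁻¹, l₀)
                  = (i₀, a * b * p₀⁻¹, l₀) := by
                simp only [reesMul, ← hp₀]
                refine Prod.ext rfl (Prod.ext ?_ rfl)
                show a * p₀⁻¹ * p₀ * (b * p₀⁻¹) = a * b * p₀⁻¹
                group
              rwa [he] at h2
            inv_mem' := by
              intro a ha
              have h2 := hclosed.2 _ ha
              show (i₀, a⁻¹ * p₀⁻¹, l₀) ∈ reesClosure P (B : Set (I × G × Λ))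
              have he : reesBar P (i₀, a * p₀⁻¹, l₀) = (i₀, a⁻¹ * p₀⁻¹, l₀) := by
                simp only [reesBar, ← hp₀]
                refine Prod.ext rfl (Prod.ext ?_ rfl)
                show p₀⁻¹ * (a * p₀⁻¹)⁻¹ * p₀⁻¹ = a⁻¹ * p₀⁻¹
                group
              rwa [he] at h2 } with hC
        have hCmem : ∀ h : G, h ∈ C ↔
            (i₀, h * p₀⁻¹, l₀) ∈ reesClosure P (B : Set (I × G × Λ)) := fun h => Iff.rfl
        have hAC : H n ≤ C := by
          rw [← hAcl]
          refine (Subgroup.closure_le C).2 ?_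
          intro a haA
          rw [SetLike.mem_coe, hCmem]
          apply subset_reesClosure
          simp only [hB, Finset.coe_insert, Set.mem_insert_iff, Finset.coe_image,
            Set.mem_image, Finset.mem_coe]
          exact Or.inr ⟨a, haA, rfl⟩
        rintro ⟨i, g, l⟩ hx
        rw [hTmem] at hx
        obtain ⟨h1, h2, h3⟩ := hx
        have h4 := (hCmem _).1 (hAC h3)
        rw [h1, h2]
        simpa using h4
  obtain ⟨p, hp⟩ := hS (M + 1) T hTcs hTmono hTrk
  refine ⟨p, fun n hn => ?_⟩
  apply le_antisymm
  · intro h hh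
    have hx : (i₀, h * p₀⁻¹, l₀) ∈ T n := (hTmem n _ _ _).2 ⟨rfl, rfl, by simpa using hh⟩
    rw [hp n hn] at hx
    have := ((hTmem p _ _ _).1 hx).2.2
    simpa using this
  · exact hmono hn


end StmtAux


/-- a Rees matrix semigroup `S = M[G; I, Λ; P]` over a group `G`
belongs to Tak(𝒞𝒮) (every ascending chain of CS-subalgebras of bounded
CS-rank is stationary) if and only if `G` is a Takahasi group (every ascending
chain of subgroups of bounded group rank is stationary). -/
theorem stmt_12 {G I Λ : Type*} [Group G] [Nonempty I] [Nonempty Λ]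
    (P : Λ × I → G) :
    (∀ (M : ℕ) (T : ℕ → Set (I × G × Λ)), (∀ n, IsReesCS P (T n)) →
       Monotone T →
       (∀ n, ∃ A : Finset (I × G × Λ), A.card ≤ M ∧
         reesClosure P (A : Set (I × G × Λ)) = T n) →
       ∃ p, ∀ n, p ≤ n → T n = T p) ↔
    (∀ (M : ℕ) (H : ℕ → Subgroup G), Monotone H →
       (∀ n, ∃ A : Finset G, A.card ≤ M ∧
         Subgroup.closure (A : Set G) = H n) →
       ∃ p, ∀ n, p ≤ n → H n = H p) := by
  exact ⟨StmtAux.fwd P, StmtAux.bwd P⟩
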